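/- arXiv:0904.0350 — 4 statements merged into one kernel-verified Lean document; each statement's English description precedes it below -/
import Mathlib

section
/- The stopping time τ = inf{n ≥ 1 : δ_n = 0} is almost surely finite; that is, with probability one a white ball is eventually drawn from the urn. -/
open MeasureTheory ProbabilityTheory Filter Finset

/-- A two-color randomly reinforced urn (RRU): starting composition `b` black and `w` white
balls; at draw `n` (indexed from 0), `δ n = 1` if a black ball is drawn and `δ n = 0` if a
white ball is drawn; the drawn ball is returned together with `UB n` black balls (if black)
or `UW n` white balls (if white), the reinforcements being i.i.d., nonnegative, bounded by
`β`, with means `mB` and `mW`.  Given the past `F n`, the draw `δ n` is Bernoulli with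
parameter `Z n = B n / (B n + W n)`, the current proportion of black balls. -/
structure RRU (Ω : Type) (m : MeasurableSpace Ω) (μ : Measure Ω) where
  b : ℝ
  w : ℝ
  β : ℝ
  mB : ℝ
  mW : ℝ
  hb : 0 < b
  hw : 0 < w
  hβ : 0 < β
  hmB : 0 < mB
  hmW : 0 < mW
  δ : ℕ → Ω → ℝ
  UB : ℕ → Ω → ℝ
  UW : ℕ → Ω → ℝ
  F : Filtration ℕ m
  hδ01 : ∀ n ω, δ n ω = 0 ∨ δ n ω = 1
  hUB_bd : ∀ n ω, UB n ω ∈ Set.Icc 0 β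
  hUW_bd : ∀ n ω, UW n ω ∈ Set.Icc 0 β
  hδ_adapted : ∀ n, Measurable[F (n + 1)] (δ n)
  hUB_adapted : ∀ n, Measurable[F (n + 1)] (UB n)
  hUW_adapted : ∀ n, Measurable[F (n + 1)] (UW n)
  hUB_ident : ∀ i, IdentDistrib (UB i) (UB 0) μ μ
  hUW_ident : ∀ i, IdentDistrib (UW i) (UW 0) μ μ
  hUB_indep : iIndepFun (m := fun _ => Real.measurableSpace) UB μ
  hUW_indep : iIndepFun (m := fun _ => Real.measurableSpace) UW μ
  hUB_mean : ∀ i, ∫ ω, UB i ω ∂μ = mB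
  hUW_mean : ∀ i, ∫ ω, UW i ω ∂μ = mW
  hU_indep_past : ∀ n,
    Indep (F n) (MeasurableSpace.comap (fun ω => (UB n ω, UW n ω)) inferInstance) μ
  hcond : ∀ n, μ[δ n | F n] =ᵐ[μ] fun ω =>
    (b + ∑ i ∈ Finset.range n, δ i ω * UB i ω) /
      ((b + ∑ i ∈ Finset.range n, δ i ω * UB i ω) +
        (w + ∑ i ∈ Finset.range n, (1 - δ i ω) * UW i ω))

namespace RRU

variable {Ω : Type} {m : MeasurableSpace Ω} {μ : Measure Ω}

/-- Number of black balls in the urn after `n` draws. -/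
noncomputable def B (r : RRU Ω m μ) (n : ℕ) (ω : Ω) : ℝ :=
  r.b + ∑ i ∈ Finset.range n, r.δ i ω * r.UB i ω

/-- Number of white balls in the urn after `n` draws. -/
noncomputable def W (r : RRU Ω m μ) (n : ℕ) (ω : Ω) : ℝ :=
  r.w + ∑ i ∈ Finset.range n, (1 - r.δ i ω) * r.UW i ω

/-- Proportion of black balls in the urn after `n` draws. -/
noncomputable def Z (r : RRU Ω m μ) (n : ℕ) (ω : Ω) : ℝ := r.B n ω / (r.B n ω + r.W n ω)

/-- Number of black draws among the first `n` draws. -/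
noncomputable def NB (r : RRU Ω m μ) (n : ℕ) (ω : Ω) : ℝ := ∑ i ∈ Finset.range n, r.δ i ω

/-- Number of white draws among the first `n` draws. -/
noncomputable def NW (r : RRU Ω m μ) (n : ℕ) (ω : Ω) : ℝ := ∑ i ∈ Finset.range n, (1 - r.δ i ω)

end RRU

/-- The stopping time `τ = inf {n ≥ 1 : δ_n = 0}` is almost surely finite:
with probability one a white ball is eventually drawn from the urn. -/
theorem rru_white_ball_eventually_drawn
    {Ω : Type} {m : MeasurableSpace Ω} {μ : Measure Ω} [IsProbabilityMeasure μ]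
    (r : RRU Ω m μ) :
    ∀ᵐ ω ∂μ, ∃ n : ℕ, r.δ n ω = 0 := by
  classical
  obtain ⟨hb, hw, hβ⟩ := And.intro r.hb (And.intro r.hw r.hβ)
  -- the running product of the draws
  set I : ℕ → Ω → ℝ := fun n ω => ∏ i ∈ Finset.range n, r.δ i ω with hIdef
  have hδmeas : ∀ n, Measurable (r.δ n) := fun n =>
    (r.hδ_adapted n).mono (r.F.le (n + 1)) le_rfl
  have hδ01' : ∀ n ω, 0 ≤ r.δ n ω ∧ r.δ n ω ≤ 1 := by
    intro n ω; rcases r.hδ01 n ω with h | h <;> simp [h]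
  have hI0 : ∀ n ω, 0 ≤ I n ω := fun n ω =>
    Finset.prod_nonneg fun i _ => (hδ01' i ω).1
  have hI1 : ∀ n ω, I n ω ≤ 1 := fun n ω =>
    Finset.prod_le_one (fun i _ => (hδ01' i ω).1) (fun i _ => (hδ01' i ω).2)
  have hImeas : ∀ n, Measurable (I n) := fun n =>
    Finset.measurable_prod _ fun i _ => hδmeas i
  have hIint : ∀ n, Integrable (I n) μ := by
    intro n
    refine ⟨(hImeas n).aestronglyMeasurable, ?_⟩
    apply HasFiniteIntegral.of_bounded (C := (1 : ℝ))
    filter_upwards with ω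
    rw [Real.norm_eq_abs, abs_le]
    exact ⟨by linarith [hI0 n ω], hI1 n ω⟩
  have hIstrong : ∀ n, StronglyMeasurable[r.F n] (I n) := by
    intro n
    apply Finset.stronglyMeasurable_fun_prod
    intro i hi
    have : Measurable[r.F n] (r.δ i) :=
      (r.hδ_adapted i).mono (r.F.mono (Nat.succ_le_of_lt (Finset.mem_range.mp hi))) le_rfl
    exact this.stronglyMeasurable
  -- the Z-formula as it appears in hcond
  set Zf : ℕ → Ω → ℝ := fun n ω =>
    (r.b + ∑ i ∈ Finset.range n, r.δ i ω * r.UB i ω) /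
      ((r.b + ∑ i ∈ Finset.range n, r.δ i ω * r.UB i ω) +
        (r.w + ∑ i ∈ Finset.range n, (1 - r.δ i ω) * r.UW i ω)) with hZfdef
  have hBpos : ∀ n ω, 0 < r.b + ∑ i ∈ Finset.range n, r.δ i ω * r.UB i ω := by
    intro n ω
    have : (0:ℝ) ≤ ∑ i ∈ Finset.range n, r.δ i ω * r.UB i ω :=
      Finset.sum_nonneg fun i _ => mul_nonneg (hδ01' i ω).1 (r.hUB_bd i ω).1
    linarith
  have hWpos : ∀ n ω, 0 < r.w + ∑ i ∈ Finset.range n, (1 - r.δ i ω) * r.UW i ω := by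
    intro n ω
    have : (0:ℝ) ≤ ∑ i ∈ Finset.range n, (1 - r.δ i ω) * r.UW i ω :=
      Finset.sum_nonneg fun i _ =>
        mul_nonneg (by linarith [(hδ01' i ω).2]) (r.hUW_bd i ω).1
    linarith
  have hZf0 : ∀ n ω, 0 ≤ Zf n ω := fun n ω =>
    div_nonneg (hBpos n ω).le (by linarith [hBpos n ω, hWpos n ω])
  -- the deterministic bound c
  set c : ℕ → ℝ := fun k => (r.b + k * r.β) / (r.b + k * r.β + r.w) with hcdef
  have hc0 : ∀ k, 0 ≤ c k := by
    intro k
    have hk : (0:ℝ) ≤ (k : ℝ) * r.β := mul_nonneg (Nat.cast_nonneg k) hβ.le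
    exact div_nonneg (by linarith) (by linarith)
  -- key recursion
  have hrec : ∀ n, ∫ ω, I (n + 1) ω ∂μ ≤ c n * ∫ ω, I n ω ∂μ := by
    intro n
    have hprod : I (n + 1) = fun ω => I n ω * r.δ n ω := by
      funext ω; simp [hIdef, Finset.prod_range_succ]
    have hint1 : Integrable (fun ω => I n ω * r.δ n ω) μ := hprod ▸ hIint (n + 1)
    have hδint : Integrable (r.δ n) μ := by
      refine ⟨(hδmeas n).aestronglyMeasurable, ?_⟩
      apply HasFiniteIntegral.of_bounded (C := (1 : ℝ))
      filter_upwards with ω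
      rw [Real.norm_eq_abs, abs_le]
      exact ⟨by linarith [(hδ01' n ω).1], (hδ01' n ω).2⟩
    have hce : μ[fun ω => I n ω * r.δ n ω | r.F n] =ᵐ[μ]
        fun ω => I n ω * Zf n ω := by
      have h1 := condExp_mul_of_stronglyMeasurable_left (μ := μ) (hIstrong n) hint1 hδint
      have h2 := r.hcond n
      filter_upwards [h1, h2] with ω h1ω h2ω
      simp only [Pi.mul_apply] at h1ω
      show (μ[I n * r.δ n | r.F n]) ω = I n ω * Zf n ω
      rw [h1ω, h2ω]
    have heq : ∫ ω, I (n + 1) ω ∂μ = ∫ ω, I n ω * Zf n ω ∂μ := by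
      rw [hprod, ← integral_condExp (μ := μ) (f := fun ω => I n ω * r.δ n ω) (r.F.le n)]
      exact integral_congr_ae hce
    rw [heq, ← integral_const_mul]
    refine integral_mono_of_nonneg ?_ ((hIint n).const_mul _) ?_
    · filter_upwards with ω
      exact mul_nonneg (hI0 n ω) (hZf0 n ω)
    · filter_upwards with ω
      -- pointwise bound
      rcases eq_or_ne (I n ω) 0 with h0 | h0
      · simp [h0]
      · -- all δ i ω = 1 for i < n
        have hall : ∀ i ∈ Finset.range n, r.δ i ω = 1 := by
          intro i hi
          rcases r.hδ01 i ω with h | h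
          · exact absurd (Finset.prod_eq_zero hi h) h0
          · exact h
        have hIone : I n ω = 1 := Finset.prod_eq_one hall
        have hWw : (∑ i ∈ Finset.range n, (1 - r.δ i ω) * r.UW i ω) = 0 := by
          apply Finset.sum_eq_zero
          intro i hi; rw [hall i hi]; ring
        have hBle : r.b + ∑ i ∈ Finset.range n, r.δ i ω * r.UB i ω
            ≤ r.b + n * r.β := by
          have : ∑ i ∈ Finset.range n, r.δ i ω * r.UB i ω
              ≤ ∑ i ∈ Finset.range n, r.β := by
            apply Finset.sum_le_sum
            intro i hi
            rw [hall i hi, one_mul]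
            exact (r.hUB_bd i ω).2
          simpa using this
        set Bv := r.b + ∑ i ∈ Finset.range n, r.δ i ω * r.UB i ω with hBv
        have hBvpos : 0 < Bv := hBpos n ω
        have hnβ : (0:ℝ) ≤ (n : ℝ) * r.β := mul_nonneg (Nat.cast_nonneg n) hβ.le
        have hZle : Zf n ω ≤ c n := by
          simp only [hZfdef, hcdef, ← hBv, hWw, add_zero]
          rw [div_le_div_iff₀ (by linarith) (by linarith)]
          nlinarith
        rw [hIone, one_mul, mul_one]
        exact hZle
  -- integral of I n bounded by product of c
  have hI0int : ∫ ω, I 0 ω ∂μ = 1 := by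
    simp [hIdef]
  have hIbound : ∀ n, ∫ ω, I n ω ∂μ ≤ ∏ k ∈ Finset.range n, c k := by
    intro n
    induction n with
    | zero => simp [hI0int]
    | succ n ih =>
      calc ∫ ω, I (n + 1) ω ∂μ ≤ c n * ∫ ω, I n ω ∂μ := hrec n
        _ ≤ c n * ∏ k ∈ Finset.range n, c k :=
            mul_le_mul_of_nonneg_left ih (hc0 n)
        _ = ∏ k ∈ Finset.range (n + 1), c k := by rw [Finset.prod_range_succ]; ring
  -- the product of c tends to zero
  set d : ℝ := r.w / (r.b + r.β + r.w) with hddef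
  have hd0 : 0 < d := div_pos hw (by linarith)
  have hcexp : ∀ k : ℕ, c k ≤ Real.exp (-(d * (1 / (k + 1 : ℝ)))) := by
    intro k
    have hk : (0:ℝ) ≤ (k : ℝ) * r.β := mul_nonneg (Nat.cast_nonneg k) hβ.le
    have hk1 : (0:ℝ) < (k : ℝ) + 1 := by positivity
    have h1 : c k = 1 - r.w / (r.b + k * r.β + r.w) := by
      rw [hcdef]
      field_simp
      ring
    have h2 : d * (1 / (k + 1 : ℝ)) ≤ r.w / (r.b + k * r.β + r.w) := by
      rw [hddef, div_mul_div_comm, mul_one, div_le_div_iff₀ (by positivity) (by linarith)]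
      nlinarith [mul_nonneg (mul_nonneg hw.le (Nat.cast_nonneg (α := ℝ) k)) hb.le,
        mul_nonneg (mul_nonneg hw.le (Nat.cast_nonneg (α := ℝ) k)) hw.le,
        mul_nonneg hw.le hβ.le]
    calc c k = 1 - r.w / (r.b + k * r.β + r.w) := h1
      _ ≤ 1 - d * (1 / (k + 1 : ℝ)) := by linarith
      _ ≤ Real.exp (-(d * (1 / (k + 1 : ℝ)))) := by
          have := Real.add_one_le_exp (-(d * (1 / (k + 1 : ℝ))))
          linarith
  have hprodle : ∀ n, ∏ k ∈ Finset.range n, c k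
      ≤ Real.exp (-(d * ∑ k ∈ Finset.range n, (1 : ℝ) / (k + 1))) := by
    intro n
    calc ∏ k ∈ Finset.range n, c k
        ≤ ∏ k ∈ Finset.range n, Real.exp (-(d * (1 / (k + 1 : ℝ)))) :=
          Finset.prod_le_prod (fun k _ => hc0 k) (fun k _ => hcexp k)
      _ = Real.exp (∑ k ∈ Finset.range n, -(d * (1 / (k + 1 : ℝ)))) := by
          rw [Real.exp_sum]
      _ = Real.exp (-(d * ∑ k ∈ Finset.range n, (1 : ℝ) / (k + 1))) := by
          congr 1
          rw [Finset.mul_sum, ← Finset.sum_neg_distrib]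
  have htend : Tendsto (fun n => Real.exp (-(d * ∑ k ∈ Finset.range n, (1:ℝ) / (k + 1))))
      atTop (nhds 0) := by
    apply Real.tendsto_exp_atBot.comp
    apply Filter.tendsto_neg_atBot_iff.mpr
    exact (Real.tendsto_sum_range_one_div_nat_succ_atTop).const_mul_atTop hd0
  -- the event of never drawing white
  set E : Set Ω := ⋂ n, {ω | r.δ n ω = 1} with hEdef
  have hEmeas : MeasurableSet E :=
    MeasurableSet.iInter fun n => (hδmeas n) (measurableSet_singleton 1)
  have hEle : ∀ n, (μ E).toReal ≤ ∫ ω, I n ω ∂μ := by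
    intro n
    rw [← measureReal_def, ← integral_indicator_one hEmeas]
    refine integral_mono_of_nonneg ?_ (hIint n) ?_
    · filter_upwards with ω
      exact Set.indicator_nonneg (fun _ _ => zero_le_one) ω
    · filter_upwards with ω
      by_cases hω : ω ∈ E
      · have : ∀ i, r.δ i ω = 1 := by
          intro i
          have := Set.mem_iInter.mp hω i
          exact this
        rw [Set.indicator_of_mem hω]
        simp only [Pi.one_apply]
        rw [hIdef]
        simp only
        rw [Finset.prod_eq_one (fun i _ => this i)]
      · rw [Set.indicator_of_notMem hω]
        exact hI0 n ω
  have hE0 : μ E = 0 := by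
    have hle : (μ E).toReal ≤ 0 := by
      refine ge_of_tendsto htend ?_
      filter_upwards with n
      exact le_trans (hEle n) (le_trans (hIbound n) (hprodle n))
    have := ENNReal.toReal_nonneg (a := μ E)
    have htoReal : (μ E).toReal = 0 := le_antisymm hle this
    exact (ENNReal.toReal_eq_zero_iff _).mp htoReal |>.resolve_right (measure_ne_top μ E)
  rw [ae_iff]
  apply measure_mono_null _ hE0
  intro ω hω
  simp only [Set.mem_setOf_eq, not_exists] at hω
  apply Set.mem_iInter.mpr
  intro n
  exact (r.hδ01 n ω).resolve_left (hω n)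
end

section
/- In the randomly reinforced urn, both colors are drawn infinitely often almost surely: N_B(n) = Σ_{i≤n} δ_i → ∞ and N_W(n) = Σ_{i≤n} (1−δ_i) → ∞ almost surely as n → ∞. -/
open MeasureTheory ProbabilityTheory Filter Finset

theorem rru_aux_main {Ω : Type} {m : MeasurableSpace Ω} {μ : Measure Ω}
    [IsProbabilityMeasure μ] (F : Filtration ℕ m)
    (d : ℕ → Ω → ℝ) (hd01 : ∀ n ω, d n ω = 0 ∨ d n ω = 1)
    (had : ∀ n, Measurable[F (n + 1)] (d n))
    (ε : ℕ → ℝ) (hε0 : ∀ n, 0 ≤ ε n) (hε1 : ∀ n, ε n ≤ 1)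
    (hdiv : Tendsto (fun n => ∑ k ∈ Finset.range n, ε k) atTop atTop)
    (hint : ∀ n (A : Set Ω), MeasurableSet[F n] A →
      ε n * (μ A).toReal ≤ ∫ ω in A, d n ω ∂μ) :
    ∀ᵐ ω ∂μ, Tendsto (fun n => ∑ i ∈ Finset.range n, d i ω) atTop atTop := by
  have hdm : ∀ n, Measurable (d n) := fun n => (had n).mono (F.le (n + 1)) le_rfl
  have hd0 : ∀ n ω, 0 ≤ d n ω := by
    intro n ω; rcases hd01 n ω with h | h <;> rw [h] <;> norm_num
  have hd1 : ∀ n ω, d n ω ≤ 1 := by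
    intro n ω; rcases hd01 n ω with h | h <;> rw [h] <;> norm_num
  -- For each n, a.s. there is k ≥ n with d k ≠ 0.
  have key : ∀ n : ℕ, ∀ᵐ ω ∂μ, ¬ (∀ k, n ≤ k → d k ω = 0) := by
    intro n
    set A : ℕ → Set Ω := fun m => {ω | ∀ k < m, d (n + k) ω = 0} with hA
    have hAmeasF : ∀ mm, MeasurableSet[F (n + mm)] (A mm) := by
      intro mm
      have : A mm = ⋂ (k : ℕ) (_ : k < mm), (d (n + k)) ⁻¹' {0} := by
        ext ω; simp [hA, Set.mem_iInter]
      rw [this]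
      refine MeasurableSet.iInter fun k => MeasurableSet.iInter fun hk => ?_
      exact (F.mono (by omega) _ (had (n + k) (measurableSet_singleton 0)))
    have hAsucc : ∀ mm, A (mm + 1) = A mm ∩ {ω | d (n + mm) ω = 0} := by
      intro mm; ext ω
      constructor
      · intro h; exact ⟨fun k hk => h k (by omega), h mm (by omega)⟩
      · rintro ⟨h1, h2⟩ k hk
        rcases Nat.lt_succ_iff_lt_or_eq.mp hk with hk' | rfl
        · exact h1 k hk'
        · exact h2
    have hrec : ∀ mm, (μ (A (mm + 1))).toReal ≤ (1 - ε (n + mm)) * (μ (A mm)).toReal := by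
      intro mm
      have hint' := hint (n + mm) (A mm) (hAmeasF mm)
      have hInt1 : IntegrableOn (fun _ : Ω => (1 : ℝ)) (A mm) μ :=
        integrableOn_const (measure_ne_top μ _)
      have hIntd : IntegrableOn (d (n + mm)) (A mm) μ := by
        refine Integrable.mono' hInt1 (hdm _).aestronglyMeasurable.restrict ?_
        exact Filter.Eventually.of_forall fun ω => by
          rw [Real.norm_eq_abs, abs_of_nonneg (hd0 _ ω)]; exact hd1 _ ω
      have hIntsub : IntegrableOn (fun ω => 1 - d (n + mm) ω) (A mm) μ := by
        refine Integrable.mono' hInt1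
          ((measurable_const.sub (hdm _)).aestronglyMeasurable.restrict) ?_
        refine Filter.Eventually.of_forall fun ω => ?_
        rw [Real.norm_eq_abs, abs_of_nonneg (by linarith [hd1 (n + mm) ω])]
        linarith [hd0 (n + mm) ω]
      have h1 : ∫ ω in A mm, (1 - d (n + mm) ω) ∂μ = (μ (A (mm + 1))).toReal := by
        have heq : (fun ω => 1 - d (n + mm) ω)
            = Set.indicator {ω | d (n + mm) ω = 0} (fun _ => (1 : ℝ)) := by
          funext ω
          rcases hd01 (n + mm) ω with h | h
          · rw [h, Set.indicator_of_mem (by exact h)]; norm_num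
          · rw [h, Set.indicator_of_notMem (by simp [h])]; norm_num
        have hm0 : MeasurableSet {ω | d (n + mm) ω = 0} :=
          hdm (n + mm) (measurableSet_singleton 0)
        rw [heq, setIntegral_indicator hm0, setIntegral_const, ← hAsucc mm]
        simp [Measure.real]
      have h2 : ∫ ω in A mm, (1 : ℝ) ∂μ = (μ (A mm)).toReal := by
        rw [setIntegral_const]; simp [Measure.real]
      have h4 : ∫ ω in A mm, d (n + mm) ω ∂μ + ∫ ω in A mm, (1 - d (n + mm) ω) ∂μ
          = ∫ ω in A mm, (1 : ℝ) ∂μ := by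
        rw [← integral_add hIntd hIntsub]; simp
      rw [h1, h2] at h4
      nlinarith [hint', h4]
    have hexp : ∀ mm, (μ (A mm)).toReal
        ≤ Real.exp (-(∑ k ∈ Finset.range mm, ε (n + k))) := by
      intro mm
      induction mm with
      | zero =>
        simp only [Finset.range_zero, Finset.sum_empty, neg_zero, Real.exp_zero]
        exact ENNReal.toReal_le_of_le_ofReal zero_le_one (by simpa using prob_le_one)
      | succ mm ih =>
        have h2 : (1 - ε (n + mm)) ≤ Real.exp (-(ε (n + mm))) := by
          have := Real.add_one_le_exp (-(ε (n + mm))); linarith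
        calc (μ (A (mm + 1))).toReal ≤ (1 - ε (n + mm)) * (μ (A mm)).toReal := hrec mm
          _ ≤ Real.exp (-(ε (n + mm))) * Real.exp (-(∑ k ∈ Finset.range mm, ε (n + k))) :=
              mul_le_mul h2 ih ENNReal.toReal_nonneg (Real.exp_nonneg _)
          _ = Real.exp (-(∑ k ∈ Finset.range (mm + 1), ε (n + k))) := by
              rw [← Real.exp_add, Finset.sum_range_succ]; congr 1; ring
    have hS : Tendsto (fun mm => ∑ k ∈ Finset.range mm, ε (n + k)) atTop atTop := by
      have h1 : Tendsto (fun mm => ∑ k ∈ Finset.range (n + mm), ε k) atTop atTop := by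
        have := hdiv.comp (tendsto_add_atTop_nat n)
        simpa [Function.comp_def, Nat.add_comm] using this
      have h2 : ∀ mm, ∑ k ∈ Finset.range mm, ε (n + k)
          = ∑ k ∈ Finset.range (n + mm), ε k + -(∑ k ∈ Finset.range n, ε k) := by
        intro mm
        rw [← Finset.sum_range_add_sum_Ico ε (Nat.le_add_right n mm),
          Finset.sum_Ico_eq_sum_range]
        simp
      simp only [h2]
      exact tendsto_atTop_add_const_right atTop _ h1
    have hBad : μ {ω | ∀ k, n ≤ k → d k ω = 0} = 0 := by
      set Bad := {ω | ∀ k, n ≤ k → d k ω = 0} with hBadDef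
      have hsub : ∀ mm, Bad ⊆ A mm := by
        intro mm ω hω k hk
        exact hω (n + k) (by omega)
      have hle : ∀ mm, (μ Bad).toReal ≤ Real.exp (-(∑ k ∈ Finset.range mm, ε (n + k))) :=
        fun mm => le_trans (ENNReal.toReal_mono (measure_ne_top μ _)
          (measure_mono (hsub mm))) (hexp mm)
      have hlim : Tendsto (fun mm => Real.exp (-(∑ k ∈ Finset.range mm, ε (n + k))))
          atTop (nhds 0) := Real.tendsto_exp_atBot.comp (tendsto_neg_atBot_iff.mpr hS)
      have : (μ Bad).toReal ≤ 0 := ge_of_tendsto' hlim hle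
      have h0 : (μ Bad).toReal = 0 := le_antisymm this ENNReal.toReal_nonneg
      exact (ENNReal.toReal_eq_zero_iff _).mp h0 |>.resolve_right (measure_ne_top μ _)
    filter_upwards [measure_eq_zero_iff_ae_notMem.mp hBad] with ω h
    exact h
  rw [← ae_all_iff] at key
  filter_upwards [key] with ω hω
  -- partial sums are monotone and unbounded
  have hmono : Monotone fun n => ∑ i ∈ Finset.range n, d i ω :=
    monotone_nat_of_le_succ fun n => by
      rw [Finset.sum_range_succ]; linarith [hd0 n ω]
  refine tendsto_atTop_atTop_of_monotone hmono ?_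
  intro M
  obtain ⟨Mn, hMn⟩ := exists_nat_ge M
  suffices h : ∀ Mn : ℕ, ∃ N, (Mn : ℝ) ≤ ∑ i ∈ Finset.range N, d i ω by
    obtain ⟨N, hN⟩ := h Mn
    exact ⟨N, le_trans hMn hN⟩
  intro Mn
  induction Mn with
  | zero => exact ⟨0, by simp⟩
  | succ Mn ih =>
    obtain ⟨N, hN⟩ := ih
    have hex : ∃ k, N ≤ k ∧ d k ω = 1 := by
      by_contra hcon
      push_neg at hcon
      exact hω N (fun k hk => (hd01 k ω).resolve_right (hcon k hk))
    obtain ⟨k, hk, hdk⟩ := hex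
    refine ⟨k + 1, ?_⟩
    have hsplit : ∑ i ∈ Finset.range (k + 1), d i ω
        = ∑ i ∈ Finset.range N, d i ω + ∑ i ∈ Finset.Ico N (k + 1), d i ω := by
      rw [Finset.sum_range_add_sum_Ico _ (by omega)]
    have hge : d k ω ≤ ∑ i ∈ Finset.Ico N (k + 1), d i ω := by
      refine Finset.single_le_sum (fun i _ => hd0 i ω) ?_
      simp [Finset.mem_Ico]; omega
    push_cast
    rw [hsplit]
    rw [hdk] at hge
    linarith


theorem rru_aux_div (c a β : ℝ) (hc : 0 < c) (ha : 0 < a) (hβ : 0 < β) :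
    Tendsto (fun n => ∑ k ∈ Finset.range n, c / (a + β * k)) atTop atTop := by
  set C := max a β with hC
  have hCpos : 0 < C := lt_of_lt_of_le ha (le_max_left _ _)
  have hterm : ∀ k : ℕ, (c / C) * (1 / (k + 1)) ≤ c / (a + β * k) := by
    intro k
    have hden_pos : 0 < a + β * k := by positivity
    have hden_le : a + β * k ≤ C * (k + 1) := by
      have h1 : a ≤ C := le_max_left _ _
      have h2 : β ≤ C := le_max_right _ _
      have h3 : β * k ≤ C * k := by
        apply mul_le_mul_of_nonneg_right h2 (Nat.cast_nonneg k)
      nlinarith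
    have : c / (C * (k + 1)) ≤ c / (a + β * k) :=
      div_le_div_of_nonneg_left hc.le hden_pos hden_le
    calc (c / C) * (1 / (k + 1)) = c / (C * (k + 1)) := by
          rw [div_mul_div_comm]; ring_nf
      _ ≤ c / (a + β * k) := this
  have hharm : Tendsto (fun n => (c / C) * ∑ k ∈ Finset.range n, (1 / (k + 1) : ℝ))
      atTop atTop :=
    (Real.tendsto_sum_range_one_div_nat_succ_atTop).const_mul_atTop (by positivity)
  refine tendsto_atTop_mono (fun n => ?_) hharm
  rw [Finset.mul_sum]
  exact Finset.sum_le_sum fun k _ => hterm k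

/-- In the randomly reinforced urn, both colors are drawn infinitely often
almost surely: `N_B(n) → ∞` and `N_W(n) → ∞` almost surely as `n → ∞`. -/
theorem rru_both_colors_drawn_infinitely_often
    {Ω : Type} {m : MeasurableSpace Ω} {μ : Measure Ω} [IsProbabilityMeasure μ]
    (r : RRU Ω m μ) :
    ∀ᵐ ω ∂μ, Tendsto (fun n => r.NB n ω) atTop atTop ∧
      Tendsto (fun n => r.NW n ω) atTop atTop := by
  -- basic bounds
  have hδ0 : ∀ n ω, 0 ≤ r.δ n ω := by
    intro n ω; rcases r.hδ01 n ω with h | h <;> rw [h] <;> norm_num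
  have hδ1 : ∀ n ω, r.δ n ω ≤ 1 := by
    intro n ω; rcases r.hδ01 n ω with h | h <;> rw [h] <;> norm_num
  have hB_lb : ∀ n ω, r.b ≤ r.B n ω := by
    intro n ω
    have : 0 ≤ ∑ i ∈ Finset.range n, r.δ i ω * r.UB i ω :=
      Finset.sum_nonneg fun i _ => mul_nonneg (hδ0 i ω) (r.hUB_bd i ω).1
    simp only [RRU.B]; linarith
  have hW_lb : ∀ n ω, r.w ≤ r.W n ω := by
    intro n ω
    have : 0 ≤ ∑ i ∈ Finset.range n, (1 - r.δ i ω) * r.UW i ω :=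
      Finset.sum_nonneg fun i _ => mul_nonneg (by linarith [hδ1 i ω]) (r.hUW_bd i ω).1
    simp only [RRU.W]; linarith
  have hBW_ub : ∀ n ω, r.B n ω + r.W n ω ≤ r.b + r.w + r.β * n := by
    intro n ω
    have hterm : ∀ i ∈ Finset.range n,
        r.δ i ω * r.UB i ω + (1 - r.δ i ω) * r.UW i ω ≤ r.β := by
      intro i _
      rcases r.hδ01 i ω with h | h
      · rw [h]; simpa using (r.hUW_bd i ω).2
      · rw [h]; simpa using (r.hUB_bd i ω).2
    have := Finset.sum_le_sum hterm
    rw [Finset.sum_const, Finset.card_range, nsmul_eq_mul] at this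
    rw [Finset.sum_add_distrib] at this
    simp only [RRU.B, RRU.W]
    linarith
  have hBWpos : ∀ n ω, 0 < r.B n ω + r.W n ω := by
    intro n ω
    have := hB_lb n ω; have := hW_lb n ω
    linarith [r.hb, r.hw]
  have hden : ∀ n : ℕ, 0 < r.b + r.w + r.β * n := by
    intro n
    have : (0:ℝ) ≤ r.β * n := mul_nonneg r.hβ.le (Nat.cast_nonneg n)
    linarith [r.hb, r.hw]
  -- measurability
  have hδm : ∀ n, Measurable (r.δ n) := fun n => (r.hδ_adapted n).mono (r.F.le (n + 1)) le_rfl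
  have hUBm : ∀ n, Measurable (r.UB n) := fun n => (r.hUB_adapted n).mono (r.F.le (n + 1)) le_rfl
  have hUWm : ∀ n, Measurable (r.UW n) := fun n => (r.hUW_adapted n).mono (r.F.le (n + 1)) le_rfl
  have hBm : ∀ n, Measurable (r.B n) := by
    intro n
    apply Measurable.const_add
    exact Finset.measurable_sum _ fun i _ => (hδm i).mul (hUBm i)
  have hWm : ∀ n, Measurable (r.W n) := by
    intro n
    apply Measurable.const_add
    exact Finset.measurable_sum _ fun i _ =>
      ((measurable_const.sub (hδm i))).mul (hUWm i)
  have hZm : ∀ n, Measurable (r.Z n) := fun n => (hBm n).div ((hBm n).add (hWm n))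
  -- the conditional expectation identity, in terms of Z
  have hcondZ : ∀ n, μ[r.δ n | r.F n] =ᵐ[μ] r.Z n := by
    intro n
    filter_upwards [r.hcond n] with ω hω
    exact hω
  -- common integral computation: ∫_A δ n = ∫_A Z n for A ∈ F n
  have hδint : ∀ n, Integrable (r.δ n) μ := by
    intro n
    refine Integrable.mono' (integrable_const (1 : ℝ)) (hδm n).aestronglyMeasurable ?_
    exact Filter.Eventually.of_forall fun ω => by
      rw [Real.norm_eq_abs, abs_of_nonneg (hδ0 n ω)]; exact hδ1 n ω
  have hsetint : ∀ n (A : Set Ω), MeasurableSet[r.F n] A →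
      ∫ ω in A, r.δ n ω ∂μ = ∫ ω in A, r.Z n ω ∂μ := by
    intro n A hA
    rw [← setIntegral_condExp (r.F.le n) (hδint n) hA]
    exact integral_congr_ae (ae_restrict_of_ae (hcondZ n))
  have hZ01 : ∀ n ω, 0 ≤ r.Z n ω ∧ r.Z n ω ≤ 1 := by
    intro n ω
    have h1 := hBWpos n ω
    have h2 := hB_lb n ω
    have h3 := hW_lb n ω
    rw [RRU.Z]
    constructor
    · apply div_nonneg (by linarith [r.hb]) h1.le
    · rw [div_le_one h1]; linarith [r.hw]
  have hZintOn : ∀ n (A : Set Ω), MeasurableSet A → IntegrableOn (r.Z n) A μ := by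
    intro n A hA
    have hInt1 : IntegrableOn (fun _ : Ω => (1 : ℝ)) A μ :=
      integrableOn_const (measure_ne_top μ _)
    refine Integrable.mono' hInt1 (hZm n).aestronglyMeasurable.restrict ?_
    exact Filter.Eventually.of_forall fun ω => by
      rw [Real.norm_eq_abs, abs_of_nonneg (hZ01 n ω).1]; exact (hZ01 n ω).2
  -- black color
  have haeB : ∀ᵐ ω ∂μ, Tendsto (fun n => ∑ i ∈ Finset.range n, r.δ i ω) atTop atTop := by
    refine rru_aux_main r.F r.δ r.hδ01 r.hδ_adapted
      (fun n => r.b / (r.b + r.w + r.β * n)) ?_ ?_ ?_ ?_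
    · intro n; exact div_nonneg r.hb.le (hden n).le
    · intro n
      rw [div_le_one (hden n)]
      have : (0:ℝ) ≤ r.β * n := mul_nonneg r.hβ.le (Nat.cast_nonneg n)
      linarith [r.hw]
    · exact rru_aux_div r.b (r.b + r.w) r.β r.hb (by linarith [r.hb, r.hw]) r.hβ
        |>.congr (fun n => Finset.sum_congr rfl fun k _ => by ring_nf)
    · intro n A hA
      have hAm : MeasurableSet A := r.F.le n A hA
      rw [hsetint n A hA]
      have hZlb : ∀ ω, r.b / (r.b + r.w + r.β * n) ≤ r.Z n ω := by
        intro ω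
        refine div_le_div₀ (by linarith [hB_lb n ω, r.hb]) (hB_lb n ω) (hBWpos n ω) ?_
        linarith [hBW_ub n ω]
      calc r.b / (r.b + r.w + r.β * n) * (μ A).toReal
          = ∫ _ in A, (r.b / (r.b + r.w + r.β * n)) ∂μ := by
            rw [setIntegral_const, smul_eq_mul, Measure.real]; ring
        _ ≤ ∫ ω in A, r.Z n ω ∂μ := by
            refine setIntegral_mono_on
              (integrableOn_const (measure_ne_top μ _))
              (hZintOn n A hAm) hAm (fun ω _ => hZlb ω)
  -- white color
  have haeW : ∀ᵐ ω ∂μ,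
      Tendsto (fun n => ∑ i ∈ Finset.range n, (1 - r.δ i ω)) atTop atTop := by
    refine rru_aux_main r.F (fun n ω => 1 - r.δ n ω) ?_ ?_
      (fun n => r.w / (r.b + r.w + r.β * n)) ?_ ?_ ?_ ?_
    · intro n ω; rcases r.hδ01 n ω with h | h <;> simp [h]
    · intro n; exact measurable_const.sub (r.hδ_adapted n)
    · intro n; exact div_nonneg r.hw.le (hden n).le
    · intro n
      rw [div_le_one (hden n)]
      have : (0:ℝ) ≤ r.β * n := mul_nonneg r.hβ.le (Nat.cast_nonneg n)
      linarith [r.hb]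
    · exact rru_aux_div r.w (r.b + r.w) r.β r.hw (by linarith [r.hb, r.hw]) r.hβ
        |>.congr (fun n => Finset.sum_congr rfl fun k _ => by ring_nf)
    · intro n A hA
      have hAm : MeasurableSet A := r.F.le n A hA
      have hInt1 : IntegrableOn (fun _ : Ω => (1 : ℝ)) A μ :=
        integrableOn_const (measure_ne_top μ _)
      have hIntd : IntegrableOn (r.δ n) A μ := (hδint n).integrableOn
      have hsplit : ∫ ω in A, (1 - r.δ n ω) ∂μ
          = ∫ ω in A, (1:ℝ) ∂μ - ∫ ω in A, r.δ n ω ∂μ := integral_sub hInt1 hIntd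
      rw [hsplit, hsetint n A hA]
      have h1 : ∫ ω in A, (1:ℝ) ∂μ - ∫ ω in A, r.Z n ω ∂μ
          = ∫ ω in A, (1 - r.Z n ω) ∂μ := (integral_sub hInt1 (hZintOn n A hAm)).symm
      rw [h1]
      have hZub : ∀ ω, r.w / (r.b + r.w + r.β * n) ≤ 1 - r.Z n ω := by
        intro ω
        have hpos := hBWpos n ω
        have heq : 1 - r.Z n ω = r.W n ω / (r.B n ω + r.W n ω) := by
          rw [RRU.Z, eq_div_iff (ne_of_gt hpos)]
          field_simp
          ring
        rw [heq]
        refine div_le_div₀ (by linarith [hW_lb n ω, r.hw]) (hW_lb n ω) hpos ?_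
        linarith [hBW_ub n ω]
      calc r.w / (r.b + r.w + r.β * n) * (μ A).toReal
          = ∫ _ in A, (r.w / (r.b + r.w + r.β * n)) ∂μ := by
            rw [setIntegral_const, smul_eq_mul, Measure.real]; ring
        _ ≤ ∫ ω in A, (1 - r.Z n ω) ∂μ := by
            refine setIntegral_mono_on
              (integrableOn_const (measure_ne_top μ _))
              (hInt1.sub (hZintOn n A hAm)) hAm (fun ω _ => hZub ω)
  filter_upwards [haeB, haeW] with ω h1 h2
  exact ⟨h1, h2⟩
end

section
/- The proportion of black draws N_B(n)/n converges almost surely to Z_∞, the almost sure limit of the urn proportions Z_n, and consequently N_W(n)/n converges almost surely to 1 − Z_∞. -/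
open MeasureTheory ProbabilityTheory Filter Finset

lemma my_tendsto_natSqrt : Tendsto Nat.sqrt atTop atTop := by
  refine tendsto_atTop_atTop.2 fun b => ⟨b * b, fun k hk => ?_⟩
  calc b = Nat.sqrt (b * b) := (Nat.sqrt_eq b).symm
  _ ≤ Nat.sqrt k := Nat.sqrt_le_sqrt hk

lemma my_sqrt_squeeze (u : ℕ → ℝ)
    (hstep : ∀ j k : ℕ, j ≤ k → |u k - u j| ≤ (k : ℝ) - (j : ℝ))
    (hsub : Tendsto (fun n : ℕ => u (n * n) / ((n * n : ℕ) : ℝ)) atTop (nhds 0)) :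
    Tendsto (fun k : ℕ => u k / (k : ℝ)) atTop (nhds 0) := by
  have h1 : Tendsto (fun k : ℕ => |u (Nat.sqrt k * Nat.sqrt k) / ((Nat.sqrt k * Nat.sqrt k : ℕ) : ℝ)|)
      atTop (nhds 0) := by
    have := (hsub.comp my_tendsto_natSqrt).abs
    simpa using this
  have h2 : Tendsto (fun k : ℕ => (2 * (Nat.sqrt k : ℝ) + 1) / ((Nat.sqrt k * Nat.sqrt k : ℕ) : ℝ))
      atTop (nhds 0) := by
    have base : Tendsto (fun n : ℕ => (2 * (n : ℝ) + 1) / ((n * n : ℕ) : ℝ)) atTop (nhds 0) := by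
      have h3 : Tendsto (fun n : ℕ => (3 : ℝ) / n) atTop (nhds 0) :=
        tendsto_const_div_atTop_nhds_zero_nat 3
      refine squeeze_zero' ?_ ?_ h3
      · filter_upwards [eventually_ge_atTop 1] with n hn
        positivity
      · filter_upwards [eventually_ge_atTop 1] with n hn
        have hn' : (1 : ℝ) ≤ (n : ℝ) := by exact_mod_cast hn
        rw [Nat.cast_mul]
        rw [div_le_div_iff₀ (by positivity) (by positivity)]
        nlinarith
    exact base.comp my_tendsto_natSqrt
  have hlim : Tendsto (fun k : ℕ =>
      |u (Nat.sqrt k * Nat.sqrt k) / ((Nat.sqrt k * Nat.sqrt k : ℕ) : ℝ)|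
        + (2 * (Nat.sqrt k : ℝ) + 1) / ((Nat.sqrt k * Nat.sqrt k : ℕ) : ℝ)) atTop (nhds 0) := by
    simpa using h1.add h2
  refine squeeze_zero_norm' ?_ hlim
  filter_upwards [eventually_ge_atTop 1] with k hk
  set s := Nat.sqrt k with hs
  have hs1 : 1 ≤ s := by
    rw [hs]
    exact Nat.sqrt_pos.2 hk
  have hssk : s * s ≤ k := by rw [hs]; exact Nat.sqrt_le k
  have hkup : k ≤ s * s + 2 * s := by
    have h7 : k < (s + 1) * (s + 1) := by rw [hs]; exact Nat.lt_succ_sqrt k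
    nlinarith
  have hkR : (0:ℝ) < (k:ℝ) := by exact_mod_cast hk
  have hssR : (0:ℝ) < ((s*s : ℕ):ℝ) := by
    have : 1 ≤ s * s := Nat.one_le_iff_ne_zero.2 (by positivity)
    exact_mod_cast this
  have hub : |u k| ≤ |u (s * s)| + (2 * (s:ℝ) + 1) := by
    have h4 := hstep (s * s) k hssk
    have h5 : |u k| - |u (s*s)| ≤ |u k - u (s*s)| := abs_sub_abs_le_abs_sub _ _
    have h6 : ((k:ℝ) - ((s*s : ℕ):ℝ)) ≤ 2 * (s:ℝ) := by
      have : (k:ℝ) ≤ ((s*s + 2*s : ℕ):ℝ) := by exact_mod_cast hkup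
      push_cast at this ⊢; linarith
    linarith
  have hnorm : ‖u k / (k:ℝ)‖ = |u k| / (k:ℝ) := by
    rw [Real.norm_eq_abs, abs_div, abs_of_nonneg hkR.le]
  rw [hnorm, abs_div, abs_of_nonneg hssR.le, ← add_div]
  calc |u k| / (k:ℝ) ≤ (|u (s*s)| + (2*(s:ℝ)+1)) / ((s*s : ℕ):ℝ) := by
        apply div_le_div₀ (by positivity) hub hssR
        exact_mod_cast hssk
  _ = _ := rfl

/-- The proportion of black draws `N_B(n)/n` converges almost surely to
`Z∞`, the a.s. limit of the urn proportions `Z n`; consequently `N_W(n)/n → 1 - Z∞`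
almost surely. -/
theorem rru_allocation_proportion_tendsto_Zinf
    {Ω : Type} {m : MeasurableSpace Ω} {μ : Measure Ω} [IsProbabilityMeasure μ]
    (r : RRU Ω m μ) (Zinf : Ω → ℝ)
    (hZinf : ∀ᵐ ω ∂μ, Tendsto (fun n => r.Z n ω) atTop (nhds (Zinf ω))) :
    ∀ᵐ ω ∂μ, Tendsto (fun n => r.NB n ω / n) atTop (nhds (Zinf ω)) ∧
      Tendsto (fun n => r.NW n ω / n) atTop (nhds (1 - Zinf ω)) := by
  classical
  have hδ0 : ∀ n ω, 0 ≤ r.δ n ω := fun n ω => by rcases r.hδ01 n ω with h | h <;> simp [h]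
  have hδ1 : ∀ n ω, r.δ n ω ≤ 1 := fun n ω => by rcases r.hδ01 n ω with h | h <;> simp [h]
  have hBpos : ∀ n ω, 0 < r.B n ω := by
    intro n ω
    have h : 0 ≤ ∑ i ∈ Finset.range n, r.δ i ω * r.UB i ω :=
      Finset.sum_nonneg fun i _ => mul_nonneg (hδ0 i ω) (r.hUB_bd i ω).1
    have := r.hb
    unfold RRU.B; linarith
  have hWpos : ∀ n ω, 0 < r.W n ω := by
    intro n ω
    have h : 0 ≤ ∑ i ∈ Finset.range n, (1 - r.δ i ω) * r.UW i ω :=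
      Finset.sum_nonneg fun i _ => mul_nonneg (by linarith [hδ1 i ω]) (r.hUW_bd i ω).1
    have := r.hw
    unfold RRU.W; linarith
  have hZ0 : ∀ n ω, 0 ≤ r.Z n ω := fun n ω =>
    div_nonneg (hBpos n ω).le (by linarith [hBpos n ω, hWpos n ω])
  have hZ1 : ∀ n ω, r.Z n ω ≤ 1 := fun n ω => by
    rw [RRU.Z, div_le_one (by linarith [hBpos n ω, hWpos n ω])]
    linarith [hWpos n ω]
  -- measurability
  have hδmeas : ∀ n, Measurable (r.δ n) := fun n => (r.hδ_adapted n).mono (r.F.le _) le_rfl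
  have hδmeasF : ∀ i n, i < n → Measurable[r.F n] (r.δ i) := fun i n h =>
    (r.hδ_adapted i).mono (r.F.mono h) le_rfl
  have hUBmeasF : ∀ i n, i < n → Measurable[r.F n] (r.UB i) := fun i n h =>
    (r.hUB_adapted i).mono (r.F.mono h) le_rfl
  have hUWmeasF : ∀ i n, i < n → Measurable[r.F n] (r.UW i) := fun i n h =>
    (r.hUW_adapted i).mono (r.F.mono h) le_rfl
  have hBmeasF : ∀ n, Measurable[r.F n] (r.B n) := by
    intro n
    apply Measurable.const_add
    exact Finset.measurable_sum _ fun i hi =>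
      (hδmeasF i n (Finset.mem_range.1 hi)).mul (hUBmeasF i n (Finset.mem_range.1 hi))
  have hWmeasF : ∀ n, Measurable[r.F n] (r.W n) := by
    intro n
    apply Measurable.const_add
    exact Finset.measurable_sum _ fun i hi =>
      (measurable_const.sub (hδmeasF i n (Finset.mem_range.1 hi))).mul
        (hUWmeasF i n (Finset.mem_range.1 hi))
  have hZmeasF : ∀ n, Measurable[r.F n] (r.Z n) := fun n =>
    (hBmeasF n).div ((hBmeasF n).add (hWmeasF n))
  have hZmeas : ∀ n, Measurable (r.Z n) := fun n => (hZmeasF n).mono (r.F.le n) le_rfl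
  -- centered increments
  set d : ℕ → Ω → ℝ := fun i ω => r.δ i ω - r.Z i ω with hd_def
  set M : ℕ → Ω → ℝ := fun n ω => ∑ i ∈ Finset.range n, d i ω with hM_def
  have hdmeas : ∀ i, Measurable (d i) := fun i => (hδmeas i).sub (hZmeas i)
  have hdbd : ∀ i ω, |d i ω| ≤ 1 := by
    intro i ω
    rw [abs_le]
    constructor
    · simp only [hd_def]; linarith [hδ0 i ω, hZ1 i ω]
    · simp only [hd_def]; linarith [hδ1 i ω, hZ0 i ω]
  have int_of_bd : ∀ (f : Ω → ℝ) (c : ℝ), Measurable f → (∀ ω, |f ω| ≤ c) → Integrable f μ :=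
    fun f c hf hb => (integrable_const c).mono' hf.aestronglyMeasurable
      (Filter.Eventually.of_forall fun ω => by simpa [Real.norm_eq_abs] using hb ω)
  have hdint : ∀ i, Integrable (d i) μ := fun i => int_of_bd _ 1 (hdmeas i) (hdbd i)
  have hδint : ∀ n, Integrable (r.δ n) μ := fun n =>
    int_of_bd _ 1 (hδmeas n) fun ω => abs_le.2 ⟨by linarith [hδ0 n ω], hδ1 n ω⟩
  have hZint : ∀ n, Integrable (r.Z n) μ := fun n =>
    int_of_bd _ 1 (hZmeas n) fun ω => abs_le.2 ⟨by linarith [hZ0 n ω], hZ1 n ω⟩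
  have inst : ∀ n, SigmaFinite (μ.trim (r.F.le n)) := fun n => inferInstance
  have hcondδ : ∀ n, μ[r.δ n | r.F n] =ᵐ[μ] r.Z n := by
    intro n
    have h := r.hcond n
    exact h
  have hcondZ : ∀ n, μ[r.Z n | r.F n] = r.Z n := fun n => by
    haveI := inst n
    exact condExp_of_stronglyMeasurable (r.F.le n) (hZmeasF n).stronglyMeasurable (hZint n)
  have hcondd : ∀ n, μ[d n | r.F n] =ᵐ[μ] 0 := by
    intro n
    haveI := inst n
    have h1 : μ[d n | r.F n] =ᵐ[μ] μ[r.δ n | r.F n] - μ[r.Z n | r.F n] :=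
      condExp_sub (hδint n) (hZint n) _
    refine h1.trans ?_
    rw [hcondZ n]
    filter_upwards [hcondδ n] with ω hω
    simp [hω]
  -- orthogonality of increments
  have hprodint : ∀ i j, Integrable (fun ω => d i ω * d j ω) μ := fun i j =>
    int_of_bd _ 1 ((hdmeas i).mul (hdmeas j)) fun ω => by
      rw [abs_mul]
      exact mul_le_one₀ (hdbd i ω) (abs_nonneg _) (hdbd j ω)
  have horth : ∀ i j, i < j → ∫ ω, d i ω * d j ω ∂μ = 0 := by
    intro i j hij
    haveI := inst j
    have hmi : StronglyMeasurable[r.F j] (d i) := by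
      apply Measurable.stronglyMeasurable
      exact ((r.hδ_adapted i).mono (r.F.mono hij) le_rfl).sub
        ((hZmeasF i).mono (r.F.mono hij.le) le_rfl)
    have h1 : μ[d i * d j | r.F j] =ᵐ[μ] d i * μ[d j | r.F j] :=
      condExp_mul_of_stronglyMeasurable_left hmi (hprodint i j) (hdint j)
    have h2 : μ[d i * d j | r.F j] =ᵐ[μ] 0 := by
      refine h1.trans ?_
      filter_upwards [hcondd j] with ω hω
      simp [hω]
    calc ∫ ω, d i ω * d j ω ∂μ = ∫ ω, (μ[d i * d j | r.F j]) ω ∂μ :=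
          (integral_condExp (r.F.le j)).symm
    _ = 0 := integral_eq_zero_of_ae h2
  -- second moment bound
  have hdsq : ∀ i, ∫ ω, d i ω * d i ω ∂μ ≤ 1 := by
    intro i
    calc ∫ ω, d i ω * d i ω ∂μ ≤ ∫ (_ : Ω), (1 : ℝ) ∂μ := by
          apply integral_mono (hprodint i i) (integrable_const 1)
          intro ω
          have h := hdbd i ω
          dsimp only
          nlinarith [abs_mul_abs_self (d i ω), abs_nonneg (d i ω)]
    _ = 1 := by simp
  have hmom : ∀ n, ∫ ω, (M n ω) ^ 2 ∂μ ≤ (n : ℝ) := by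
    intro n
    have hexp : (fun ω => (M n ω) ^ 2) =
        fun ω => ∑ i ∈ Finset.range n, ∑ j ∈ Finset.range n, d i ω * d j ω := by
      funext ω
      rw [sq, hM_def]
      exact Finset.sum_mul_sum _ _ _ _
    rw [hexp]
    rw [integral_finset_sum _ fun i _ => integrable_finset_sum _ fun j _ => hprodint i j]
    have hinner : ∀ i ∈ Finset.range n,
        ∫ ω, ∑ j ∈ Finset.range n, d i ω * d j ω ∂μ ≤ 1 := by
      intro i hi
      rw [integral_finset_sum _ fun j _ => hprodint i j]
      have : ∑ j ∈ Finset.range n, ∫ ω, d i ω * d j ω ∂μ = ∫ ω, d i ω * d i ω ∂μ := by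
        apply Finset.sum_eq_single i
        · intro j _ hji
          rcases lt_or_gt_of_ne hji with h | h
          · have := horth j i h
            simpa [mul_comm] using this
          · exact horth i j h
        · intro hni; exact absurd hi hni
      rw [this]
      exact hdsq i
    calc ∑ i ∈ Finset.range n, ∫ ω, ∑ j ∈ Finset.range n, d i ω * d j ω ∂μ
        ≤ ∑ _i ∈ Finset.range n, (1 : ℝ) := Finset.sum_le_sum hinner
    _ = (n : ℝ) := by simp
  -- a.e. convergence along squares
  have hM0 : ∀ ω, M 0 ω = 0 := fun ω => by simp [hM_def]
  set g : ℕ → Ω → ℝ := fun n ω => (M (n * n) ω / ((n * n : ℕ) : ℝ)) ^ 2 with hg_def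
  have hMbd : ∀ k ω, |M k ω| ≤ (k : ℝ) := by
    intro k ω
    calc |M k ω| ≤ ∑ i ∈ Finset.range k, |d i ω| := by
          rw [hM_def]; exact Finset.abs_sum_le_sum_abs _ _
    _ ≤ ∑ _i ∈ Finset.range k, (1 : ℝ) := Finset.sum_le_sum fun i _ => hdbd i ω
    _ = (k : ℝ) := by simp
  have hgmeas : ∀ n, Measurable (g n) := fun n =>
    ((Finset.measurable_sum _ fun i _ => hdmeas i).div_const _).pow_const 2
  have hgbd : ∀ n ω, |g n ω| ≤ 1 := by
    intro n ω
    rcases Nat.eq_zero_or_pos n with h | h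
    · simp [hg_def, h, hM0]
    · have hc : (0:ℝ) < ((n * n : ℕ) : ℝ) := by
        have : 1 ≤ n * n := Nat.one_le_iff_ne_zero.2 (by positivity)
        exact_mod_cast this
      have h1 : |M (n * n) ω / ((n * n : ℕ) : ℝ)| ≤ 1 := by
        rw [abs_div, abs_of_nonneg hc.le, div_le_one hc]
        exact hMbd (n * n) ω
      simp only [hg_def]
      rw [abs_pow]
      exact pow_le_one₀ (abs_nonneg _) h1
  have hgint : ∀ n, Integrable (g n) μ := fun n => int_of_bd _ 1 (hgmeas n) (hgbd n)
  have hgIntle : ∀ n, ∫ ω, g n ω ∂μ ≤ 1 / ((n : ℝ)) ^ 2 := by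
    intro n
    rcases Nat.eq_zero_or_pos n with h | h
    · subst h
      simp [hg_def, hM0]
    · have hc : (0:ℝ) < ((n * n : ℕ) : ℝ) := by
        have : 1 ≤ n * n := Nat.one_le_iff_ne_zero.2 (by positivity)
        exact_mod_cast this
      have hn0 : (n : ℝ) ≠ 0 := Nat.cast_ne_zero.2 (by omega)
      have heq : (fun ω => g n ω) = fun ω => (M (n * n) ω) ^ 2 / ((n * n : ℕ) : ℝ) ^ 2 := by
        funext ω; simp only [hg_def]; rw [div_pow]
      have hcast : ((n * n : ℕ) : ℝ) = (n : ℝ) ^ 2 := by push_cast; ring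
      calc ∫ ω, g n ω ∂μ = (∫ ω, (M (n * n) ω) ^ 2 ∂μ) / ((n * n : ℕ) : ℝ) ^ 2 := by
            rw [heq, integral_div]
      _ ≤ ((n * n : ℕ) : ℝ) / ((n * n : ℕ) : ℝ) ^ 2 := by
            gcongr
            exact hmom (n * n)
      _ = 1 / ((n : ℝ)) ^ 2 := by
            rw [hcast]
            field_simp
  have hsummable : Summable (fun n : ℕ => 1 / ((n : ℝ)) ^ 2) :=
    Real.summable_one_div_nat_pow.2 one_lt_two
  have key : ∑' n, ∫⁻ ω, ENNReal.ofReal (g n ω) ∂μ ≠ ⊤ := by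
    have heq : ∀ n, ∫⁻ ω, ENNReal.ofReal (g n ω) ∂μ = ENNReal.ofReal (∫ ω, g n ω ∂μ) :=
      fun n => (ofReal_integral_eq_lintegral_ofReal (hgint n)
        (Filter.Eventually.of_forall fun ω => by simp only [hg_def]; positivity)).symm
    have hle : ∑' n, ∫⁻ ω, ENNReal.ofReal (g n ω) ∂μ
        ≤ ENNReal.ofReal (∑' n : ℕ, 1 / ((n : ℝ)) ^ 2) := by
      rw [ENNReal.ofReal_tsum_of_nonneg (fun n => by positivity) hsummable]
      exact ENNReal.tsum_le_tsum fun n => by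
        rw [heq n]; exact ENNReal.ofReal_le_ofReal (hgIntle n)
    exact ne_top_of_le_ne_top ENNReal.ofReal_ne_top hle
  have hfin : ∀ᵐ ω ∂μ, ∑' n, ENNReal.ofReal (g n ω) ≠ ⊤ := by
    have hmeas' : Measurable fun ω => ∑' n, ENNReal.ofReal (g n ω) :=
      Measurable.ennreal_tsum fun n => (hgmeas n).ennreal_ofReal
    have hlt := ae_lt_top hmeas' (by
      rw [lintegral_tsum fun n => ((hgmeas n).ennreal_ofReal).aemeasurable]
      exact key)
    filter_upwards [hlt] with ω h using h.ne
  have hsubseq : ∀ᵐ ω ∂μ,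
      Tendsto (fun n : ℕ => M (n * n) ω / ((n * n : ℕ) : ℝ)) atTop (nhds 0) := by
    filter_upwards [hfin] with ω hω
    have h0 : Tendsto (fun n => ENNReal.ofReal (g n ω)) atTop (nhds 0) :=
      ENNReal.tendsto_atTop_zero_of_tsum_ne_top hω
    have h1 : Tendsto (fun n => g n ω) atTop (nhds 0) := by
      have h2 := (ENNReal.tendsto_toReal (by simp : (0:ENNReal) ≠ ⊤)).comp h0
      simp only [ENNReal.toReal_zero] at h2
      refine h2.congr fun n => ?_
      simp only [Function.comp_apply]
      exact ENNReal.toReal_ofReal (by simp only [hg_def]; positivity)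
    apply (tendsto_zero_iff_abs_tendsto_zero _).2
    have h2 : Tendsto (fun n => Real.sqrt (g n ω)) atTop (nhds 0) := by
      have h3 := (Real.continuous_sqrt.tendsto 0).comp h1
      simpa [Function.comp_def] using h3
    refine h2.congr fun n => ?_
    simp only [hg_def]
    exact Real.sqrt_sq_eq_abs _
  -- conclusion
  filter_upwards [hZinf, hsubseq] with ω hZω hsubω
  have hstep : ∀ j k : ℕ, j ≤ k → |M k ω - M j ω| ≤ (k : ℝ) - (j : ℝ) := by
    intro j k hjk
    have heq : M k ω - M j ω = ∑ i ∈ Finset.Ico j k, d i ω := by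
      rw [hM_def]
      exact (Finset.sum_Ico_eq_sub _ hjk).symm
    rw [heq]
    calc |∑ i ∈ Finset.Ico j k, d i ω| ≤ ∑ i ∈ Finset.Ico j k, |d i ω| :=
          Finset.abs_sum_le_sum_abs _ _
    _ ≤ ∑ _i ∈ Finset.Ico j k, (1 : ℝ) := Finset.sum_le_sum fun i _ => hdbd i ω
    _ = ((k - j : ℕ) : ℝ) := by simp [Nat.card_Ico]
    _ = (k : ℝ) - (j : ℝ) := by rw [Nat.cast_sub hjk]
  have hMten : Tendsto (fun k : ℕ => M k ω / (k : ℝ)) atTop (nhds 0) :=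
    my_sqrt_squeeze (fun k => M k ω) hstep hsubω
  have hces : Tendsto (fun n : ℕ => (∑ i ∈ Finset.range n, r.Z i ω) / (n : ℝ)) atTop
      (nhds (Zinf ω)) := by
    have h1 := hZω.cesaro
    exact h1.congr fun n => by rw [inv_mul_eq_div]
  have hNBten : Tendsto (fun n : ℕ => r.NB n ω / n) atTop (nhds (Zinf ω)) := by
    have heq : ∀ n : ℕ, r.NB n ω / n = M n ω / n + (∑ i ∈ Finset.range n, r.Z i ω) / n := by
      intro n
      rw [← add_div]
      congr 1
      rw [RRU.NB, hM_def, ← Finset.sum_add_distrib]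
      exact Finset.sum_congr rfl fun i _ => by simp [hd_def]
    have h2 := hMten.add hces
    rw [zero_add] at h2
    exact h2.congr fun n => (heq n).symm
  refine ⟨hNBten, ?_⟩
  have hNW : ∀ᶠ n : ℕ in atTop, (1 : ℝ) - r.NB n ω / n = r.NW n ω / n := by
    filter_upwards [eventually_ge_atTop 1] with n hn
    have hne : (n : ℝ) ≠ 0 := Nat.cast_ne_zero.2 (by omega)
    have heq : r.NW n ω = (n : ℝ) - r.NB n ω := by
      rw [RRU.NW, RRU.NB, Finset.sum_sub_distrib]
      simp
    rw [heq, sub_div, div_self hne]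
  exact (tendsto_const_nhds.sub hNBten).congr' hNW
end

section
/- Let (ξ_n) be a real random sequence adapted to a filtration (F_n). Set Δ_n = E(ξ_{n+1} − ξ_n | F_n) and Q_n = E((ξ_{n+1} − ξ_n)^2 | F_n). If Σ_n |Δ_n| < ∞ and Σ_n Q_n < ∞ almost surely, then ξ_n converges almost surely to a finite random variable. -/
open MeasureTheory ProbabilityTheory Filter Finset
open scoped ENNReal NNReal

/-- Prefix-truncated sums of nonnegative terms are bounded by `max c 0`. -/
lemma pv_prefix_sum_le (q : ℕ → ℝ) (hq : ∀ k, 0 ≤ q k) (c : ℝ) (n : ℕ) :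
    (∑ k ∈ Finset.range n, if (∑ j ∈ Finset.range (k + 1), q j) ≤ c then q k else 0)
      ≤ max c 0 := by
  have main : ∀ n : ℕ,
      (∑ k ∈ Finset.range n, if (∑ j ∈ Finset.range (k + 1), q j) ≤ c then q k else 0)
        ≤ ∑ k ∈ Finset.range n, q k ∧
      (∑ k ∈ Finset.range n, if (∑ j ∈ Finset.range (k + 1), q j) ≤ c then q k else 0)
        ≤ max c 0 := by
    intro n
    induction n with
    | zero => simp
    | succ n ih =>
      obtain ⟨ih1, ih2⟩ := ih
      rw [Finset.sum_range_succ]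
      constructor
      · rw [Finset.sum_range_succ (f := q)]
        gcongr
        split_ifs with h
        · exact le_rfl
        · exact hq n
      · split_ifs with h
        · calc (∑ k ∈ Finset.range n,
              if (∑ j ∈ Finset.range (k + 1), q j) ≤ c then q k else 0) + q n
              ≤ (∑ k ∈ Finset.range n, q k) + q n := by gcongr
            _ = ∑ j ∈ Finset.range (n + 1), q j := (Finset.sum_range_succ q n).symm
            _ ≤ c := h
            _ ≤ max c 0 := le_max_left _ _
        · simpa using ih2
  exact (main n).2

lemma pv_integrable_mul_of_memL2 {Ω : Type} {m : MeasurableSpace Ω} {μ : Measure Ω}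
    {f g : Ω → ℝ} (hf : MemLp f 2 μ) (hg : MemLp g 2 μ) :
    Integrable (fun ω => f ω * g ω) μ := by
  haveI : ENNReal.HolderTriple 2 2 1 := ⟨by simp [ENNReal.inv_two_add_inv_two]⟩
  have h : MemLp (f • g) 1 μ := hg.smul (p := 2) (q := 2) hf
  rw [memLp_one_iff_integrable] at h
  exact h

theorem key_lemma
    {Ω : Type} {m : MeasurableSpace Ω} {μ : Measure Ω} [IsProbabilityMeasure μ]
    (F : Filtration ℕ m) (ξ : ℕ → Ω → ℝ)
    (hadapted : Adapted F ξ)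
    (hint : ∀ n, Integrable (ξ n) μ)
    (hsq : ∀ n, Integrable (fun ω => (ξ (n + 1) ω - ξ n ω) ^ 2) μ)
    (c : ℕ) :
    ∀ᵐ ω ∂μ,
      ((∀ n, (∑ k ∈ Finset.range (n + 1), (μ[fun ω' => (ξ (k + 1) ω' - ξ k ω') ^ 2|F k]) ω) ≤ (c : ℝ)) ∧
       (∀ n, (∑ k ∈ Finset.range (n + 1), |(μ[fun ω' => ξ (k + 1) ω' - ξ k ω'|F k]) ω|) ≤ (c : ℝ))) →
      ∃ L : ℝ, Tendsto (fun n => ξ n ω) atTop (nhds L) := by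
  classical
  set X : ℕ → Ω → ℝ := fun n ω => ξ (n + 1) ω - ξ n ω with hXdef
  set D : ℕ → Ω → ℝ := fun n => μ[X n | F n] with hDdef
  set Q' : ℕ → Ω → ℝ := fun n => μ[fun ω => (X n ω) ^ 2 | F n] with hQ'def
  have hXint : ∀ n, Integrable (X n) μ := fun n => (hint (n + 1)).sub (hint n)
  have hXsq : ∀ n, Integrable (fun ω => (X n ω) ^ 2) μ := fun n => hsq n
  have hXmeas : ∀ n, StronglyMeasurable[F (n + 1)] (X n) :=
    fun n => by
      have h1 : Measurable[F (n + 1)] (ξ (n + 1)) := hadapted (n + 1)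
      have h0 : Measurable[F (n + 1)] (ξ n) := (hadapted n).mono (F.mono n.le_succ) le_rfl
      exact (h1.sub h0).stronglyMeasurable
  have hX2 : ∀ n, MemLp (X n) 2 μ := fun n =>
    (memLp_two_iff_integrable_sq (hXint n).aestronglyMeasurable).2 (hXsq n)
  have hDmeas : ∀ n, StronglyMeasurable[F n] (D n) := fun n => stronglyMeasurable_condExp
  have hDint : ∀ n, Integrable (D n) μ := fun n => integrable_condExp
  have hQ'meas : ∀ n, StronglyMeasurable[F n] (Q' n) := fun n => stronglyMeasurable_condExp
  have hQ'int : ∀ n, Integrable (Q' n) μ := fun n => integrable_condExp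
  have hQ'nonneg : ∀ n, 0 ≤ᵐ[μ] Q' n :=
    fun n => condExp_nonneg (Filter.Eventually.of_forall fun ω => sq_nonneg _)
  set A : ℕ → Set Ω := fun n =>
    {ω | (∑ k ∈ Finset.range (n + 1), Q' k ω) ≤ (c : ℝ)} ∩
    {ω | (∑ k ∈ Finset.range (n + 1), |D k ω|) ≤ (c : ℝ)} with hAdef
  have hAmeas : ∀ n, MeasurableSet[F n] (A n) := by
    intro n
    letI : MeasurableSpace Ω := F n
    have h1 : Measurable[F n] fun ω => ∑ k ∈ Finset.range (n + 1), Q' k ω :=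
      Finset.measurable_sum _ fun k hk =>
        ((hQ'meas k).mono (F.mono (Nat.lt_succ_iff.mp (Finset.mem_range.mp hk)))).measurable
    have h2 : Measurable[F n] fun ω => ∑ k ∈ Finset.range (n + 1), |D k ω| :=
      Finset.measurable_sum _ fun k hk =>
        ((hDmeas k).mono (F.mono (Nat.lt_succ_iff.mp (Finset.mem_range.mp hk)))).measurable.abs
    exact (measurableSet_le h1 measurable_const).inter (measurableSet_le h2 measurable_const)
  have hAmeas0 : ∀ n, MeasurableSet (A n) := fun n => F.le n _ (hAmeas n)
  set gg : ℕ → Ω → ℝ := fun n => (A n).indicator (D n) with hggdef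
  set hh : ℕ → Ω → ℝ := fun n => (A n).indicator (X n) with hhhdef
  set Y : ℕ → Ω → ℝ := fun n => hh n - gg n with hYdef
  set N : ℕ → Ω → ℝ := fun n ω => ∑ k ∈ Finset.range n, Y k ω with hNdef
  have hNsucc : ∀ n, N (n + 1) = fun ω => N n ω + Y n ω := by
    intro n; funext ω; exact Finset.sum_range_succ _ n
  -- boundedness of gg
  have hggbd : ∀ n ω, ‖gg n ω‖ ≤ (c : ℝ) := by
    intro n ω
    by_cases hω : ω ∈ A n
    · rw [hggdef]
      simp only [Set.indicator_of_mem hω, Real.norm_eq_abs]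
      exact le_trans (Finset.single_le_sum (f := fun k => |D k ω|)
        (fun k _ => abs_nonneg _) (Finset.self_mem_range_succ n)) hω.2
    · rw [hggdef]
      simp only [Set.indicator_of_notMem hω, norm_zero]
      exact Nat.cast_nonneg c
  have hgg_sm : ∀ n, StronglyMeasurable[F n] (gg n) := fun n => (hDmeas n).indicator (hAmeas n)
  have hgg2 : ∀ n, MemLp (gg n) 2 μ := fun n =>
    (memLp_top_of_bound ((hgg_sm n).mono (F.le n)).aestronglyMeasurable _
      (Filter.Eventually.of_forall (hggbd n))).mono_exponent le_top
  have hggint : ∀ n, Integrable (gg n) μ := fun n => (hgg2 n).integrable one_le_two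
  have hhh2 : ∀ n, MemLp (hh n) 2 μ := fun n => (hX2 n).indicator (hAmeas0 n)
  have hhhint : ∀ n, Integrable (hh n) μ := fun n => (hhh2 n).integrable one_le_two
  have hY2 : ∀ n, MemLp (Y n) 2 μ := fun n => (hhh2 n).sub (hgg2 n)
  have hYint : ∀ n, Integrable (Y n) μ := fun n => (hhhint n).sub (hggint n)
  have hYsm : ∀ n, StronglyMeasurable[F (n + 1)] (Y n) := fun n =>
    ((hXmeas n).indicator (F.mono n.le_succ _ (hAmeas n))).sub
      (((hDmeas n).mono (F.mono n.le_succ)).indicator (F.mono n.le_succ _ (hAmeas n)))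
  have hNsm : ∀ n, StronglyMeasurable[F n] (N n) := by
    intro n
    letI : MeasurableSpace Ω := F n
    refine Measurable.stronglyMeasurable ?_
    refine Finset.measurable_sum _ fun k hk => ?_
    exact ((hYsm k).mono (F.mono (Finset.mem_range.mp hk))).measurable
  have hNint : ∀ n, Integrable (N n) μ := fun n =>
    integrable_finset_sum _ fun k _ => hYint k
  have hN2 : ∀ n, MemLp (N n) 2 μ := by
    intro n
    have := memLp_finset_sum' (Finset.range n) (fun k _ => hY2 k)
    refine this.ae_eq ?_
    refine Filter.Eventually.of_forall fun ω => ?_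
    rw [Finset.sum_apply]
  have hNsqint : ∀ n, Integrable (fun ω => (N n ω) ^ 2) μ := fun n =>
    (memLp_two_iff_integrable_sq (hN2 n).aestronglyMeasurable).1 (hN2 n)
  have hYsqint : ∀ n, Integrable (fun ω => (Y n ω) ^ 2) μ := fun n =>
    (memLp_two_iff_integrable_sq (hY2 n).aestronglyMeasurable).1 (hY2 n)
  -- conditional expectation of Y vanishes
  have hYcond : ∀ n, μ[Y n|F n] =ᵐ[μ] 0 := by
    intro n
    have h1 : μ[Y n|F n] =ᵐ[μ] μ[hh n|F n] - μ[gg n|F n] := condExp_sub (hhhint n) (hggint n) _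
    have h2 : μ[hh n|F n] =ᵐ[μ] (A n).indicator (μ[X n|F n]) :=
      condExp_indicator (hXint n) (hAmeas n)
    have h3 : μ[gg n|F n] = gg n :=
      condExp_of_stronglyMeasurable (F.le n) (hgg_sm n) (hggint n)
    filter_upwards [h1, h2] with ω e1 e2
    rw [Pi.zero_apply, e1, Pi.sub_apply, e2, h3]
    have : (A n).indicator (μ[X n|F n]) ω = gg n ω := rfl
    rw [this, sub_self]
  -- N is a martingale
  have hNmart : Martingale N F μ := by
    refine martingale_nat (fun n => hNsm n) hNint fun n => ?_
    have h1 : μ[N (n + 1)|F n] =ᵐ[μ] μ[N n|F n] + μ[Y n|F n] := by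
      rw [hNsucc n]
      exact condExp_add (hNint n) (hYint n) _
    have h2 : μ[N n|F n] = N n :=
      condExp_of_stronglyMeasurable (F.le n) (hNsm n) (hNint n)
    filter_upwards [h1, hYcond n] with ω e1 e3
    rw [e1, Pi.add_apply, h2, e3, Pi.zero_apply, add_zero]
  -- cross terms vanish
  have hcross : ∀ n, ∫ ω, N n ω * Y n ω ∂μ = 0 := by
    intro n
    have hintNY : Integrable (fun ω => N n ω * Y n ω) μ :=
      pv_integrable_mul_of_memL2 (hN2 n) (hY2 n)
    have e : μ[N n * Y n|F n] =ᵐ[μ] N n * μ[Y n|F n] :=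
      condExp_mul_of_stronglyMeasurable_left (hNsm n) hintNY (hYint n)
    have e2 : μ[N n * Y n|F n] =ᵐ[μ] 0 := by
      filter_upwards [e, hYcond n] with ω e1 e3
      rw [Pi.zero_apply, e1, Pi.mul_apply, e3, Pi.zero_apply, mul_zero]
    calc ∫ ω, N n ω * Y n ω ∂μ = ∫ ω, (μ[N n * Y n|F n]) ω ∂μ :=
          (integral_condExp (F.le n)).symm
      _ = 0 := by rw [integral_congr_ae e2]; simp
  -- second moment of increments
  have hYsqbd : ∀ n, ∫ ω, (Y n ω) ^ 2 ∂μ ≤ ∫ ω, (A n).indicator (Q' n) ω ∂μ := by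
    intro n
    have hggAESM : AEStronglyMeasurable (gg n) μ := ((hgg_sm n).mono (F.le n)).aestronglyMeasurable
    have hggbd' : ∀ᵐ ω ∂μ, ‖gg n ω‖ ≤ (c : ℝ) := Filter.Eventually.of_forall (hggbd n)
    have hgXint : Integrable (fun ω => gg n ω * X n ω) μ :=
      (hXint n).bdd_mul hggAESM hggbd'
    have hghint : Integrable (fun ω => gg n ω * hh n ω) μ :=
      (hhhint n).bdd_mul hggAESM hggbd'
    have hg2int : Integrable (fun ω => gg n ω * gg n ω) μ :=
      (hggint n).bdd_mul hggAESM hggbd'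
    have hh2int : Integrable (fun ω => (hh n ω) ^ 2) μ :=
      (memLp_two_iff_integrable_sq (hhh2 n).aestronglyMeasurable).1 (hhh2 n)
    have e1 : ∫ ω, gg n ω * hh n ω ∂μ = ∫ ω, gg n ω * X n ω ∂μ := by
      refine integral_congr_ae (Filter.Eventually.of_forall fun ω => ?_)
      by_cases hω : ω ∈ A n
      · rw [hhhdef]; simp only [Set.indicator_of_mem hω]
      · rw [hggdef]; simp only [Set.indicator_of_notMem hω, zero_mul]
    have e2 : ∫ ω, gg n ω * X n ω ∂μ = ∫ ω, gg n ω * D n ω ∂μ := by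
      have hpull : μ[gg n * X n|F n] =ᵐ[μ] gg n * μ[X n|F n] :=
        condExp_mul_of_stronglyMeasurable_left (hgg_sm n) hgXint (hXint n)
      calc ∫ ω, gg n ω * X n ω ∂μ = ∫ ω, (μ[gg n * X n|F n]) ω ∂μ :=
            (integral_condExp (F.le n)).symm
        _ = ∫ ω, gg n ω * D n ω ∂μ := integral_congr_ae (hpull.mono fun ω e => by
            rw [e, Pi.mul_apply])
    have e3 : ∫ ω, gg n ω * D n ω ∂μ = ∫ ω, gg n ω * gg n ω ∂μ := by
      refine integral_congr_ae (Filter.Eventually.of_forall fun ω => ?_)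
      by_cases hω : ω ∈ A n
      · rw [hggdef]; simp only [Set.indicator_of_mem hω]
      · rw [hggdef]; simp only [Set.indicator_of_notMem hω, zero_mul]
    have e4 : ∫ ω, (hh n ω) ^ 2 ∂μ = ∫ ω, (A n).indicator (Q' n) ω ∂μ := by
      have l1 : ∫ ω, (hh n ω) ^ 2 ∂μ = ∫ ω in A n, (X n ω) ^ 2 ∂μ := by
        rw [← integral_indicator (hAmeas0 n)]
        refine integral_congr_ae (Filter.Eventually.of_forall fun ω => ?_)
        by_cases hω : ω ∈ A n
        · rw [hhhdef]; simp only [Set.indicator_of_mem hω]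
        · rw [hhhdef]; simp only [Set.indicator_of_notMem hω]; ring
      have l2 : ∫ ω in A n, (X n ω) ^ 2 ∂μ = ∫ ω in A n, Q' n ω ∂μ :=
        (setIntegral_condExp (F.le n) (hXsq n) (hAmeas n)).symm
      rw [l1, l2, integral_indicator (hAmeas0 n)]
    have expand : ∀ ω, (Y n ω) ^ 2 = ((hh n ω) ^ 2 - 2 * (gg n ω * hh n ω)) + gg n ω * gg n ω := by
      intro ω
      rw [hYdef]
      simp only [Pi.sub_apply]
      ring
    calc ∫ ω, (Y n ω) ^ 2 ∂μ
        = ∫ ω, (((hh n ω) ^ 2 - 2 * (gg n ω * hh n ω)) + gg n ω * gg n ω) ∂μ :=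
          integral_congr_ae (Filter.Eventually.of_forall expand)
      _ = ∫ ω, ((hh n ω) ^ 2 - 2 * (gg n ω * hh n ω)) ∂μ + ∫ ω, gg n ω * gg n ω ∂μ := by
          have hi1 : Integrable (fun ω => (hh n ω) ^ 2 - 2 * (gg n ω * hh n ω)) μ :=
            hh2int.sub (hghint.const_mul 2)
          exact integral_add hi1 hg2int
      _ = (∫ ω, (hh n ω) ^ 2 ∂μ - 2 * ∫ ω, gg n ω * hh n ω ∂μ) + ∫ ω, gg n ω * gg n ω ∂μ := by
          rw [integral_sub hh2int (hghint.const_mul 2), integral_const_mul]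
      _ = ∫ ω, (hh n ω) ^ 2 ∂μ - ∫ ω, gg n ω * gg n ω ∂μ := by
          rw [e1, e2, e3]; ring
      _ ≤ ∫ ω, (hh n ω) ^ 2 ∂μ := by
          have : 0 ≤ ∫ ω, gg n ω * gg n ω ∂μ := integral_nonneg fun ω => mul_self_nonneg _
          linarith
      _ = _ := e4
  -- second moment of N is bounded
  have hAQint : ∀ k, Integrable ((A k).indicator (Q' k)) μ := fun k =>
    (hQ'int k).indicator (hAmeas0 k)
  have hV : ∀ n, ∫ ω, (N n ω) ^ 2 ∂μ ≤
      ∑ k ∈ Finset.range n, ∫ ω, (A k).indicator (Q' k) ω ∂μ := by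
    intro n
    induction n with
    | zero => simp [hNdef]
    | succ n ih =>
      have hNYint : Integrable (fun ω => 2 * (N n ω * Y n ω)) μ :=
        (pv_integrable_mul_of_memL2 (hN2 n) (hY2 n)).const_mul 2
      have expand : ∀ ω, (N (n + 1) ω) ^ 2 =
          ((N n ω) ^ 2 + 2 * (N n ω * Y n ω)) + (Y n ω) ^ 2 := by
        intro ω
        rw [hNsucc n]
        ring
      calc ∫ ω, (N (n + 1) ω) ^ 2 ∂μ
          = ∫ ω, (((N n ω) ^ 2 + 2 * (N n ω * Y n ω)) + (Y n ω) ^ 2) ∂μ :=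
            integral_congr_ae (Filter.Eventually.of_forall expand)
        _ = (∫ ω, (N n ω) ^ 2 ∂μ + ∫ ω, 2 * (N n ω * Y n ω) ∂μ) + ∫ ω, (Y n ω) ^ 2 ∂μ := by
            have hi1 : Integrable (fun ω => (N n ω) ^ 2 + 2 * (N n ω * Y n ω)) μ :=
              (hNsqint n).add hNYint
            rw [integral_add hi1 (hYsqint n), integral_add (hNsqint n) hNYint]
        _ = ∫ ω, (N n ω) ^ 2 ∂μ + ∫ ω, (Y n ω) ^ 2 ∂μ := by
            rw [integral_const_mul, hcross n]; ring
        _ ≤ (∑ k ∈ Finset.range n, ∫ ω, (A k).indicator (Q' k) ω ∂μ) +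
              ∫ ω, (A n).indicator (Q' n) ω ∂μ := add_le_add ih (hYsqbd n)
        _ = _ := (Finset.sum_range_succ _ n).symm
  have hsum_bd : ∀ n, (∑ k ∈ Finset.range n, ∫ ω, (A k).indicator (Q' k) ω ∂μ)
      ≤ max (c : ℝ) 0 := by
    intro n
    rw [← integral_finset_sum _ fun k _ => hAQint k]
    have hbound : ∀ᵐ ω ∂μ,
        (∑ k ∈ Finset.range n, (A k).indicator (Q' k) ω) ≤ max (c : ℝ) 0 := by
      filter_upwards [ae_all_iff.2 hQ'nonneg] with ω hQω
      calc (∑ k ∈ Finset.range n, (A k).indicator (Q' k) ω)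
          ≤ ∑ k ∈ Finset.range n,
              (if (∑ j ∈ Finset.range (k + 1), Q' j ω) ≤ (c : ℝ) then Q' k ω else 0) := by
            refine Finset.sum_le_sum fun k _ => ?_
            by_cases hω : ω ∈ A k
            · have hc1 : (∑ j ∈ Finset.range (k + 1), Q' j ω) ≤ (c : ℝ) := hω.1
              rw [Set.indicator_of_mem hω, if_pos hc1]
            · rw [Set.indicator_of_notMem hω]
              split_ifs
              · simpa using hQω k
              · exact le_rfl
        _ ≤ max (c : ℝ) 0 := pv_prefix_sum_le _ (fun k => by simpa using hQω k) _ n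
    calc ∫ ω, (∑ k ∈ Finset.range n, (A k).indicator (Q' k) ω) ∂μ
        ≤ ∫ _ω, max (c : ℝ) 0 ∂μ :=
          integral_mono_ae (integrable_finset_sum _ fun k _ => hAQint k)
            (integrable_const _) hbound
      _ = max (c : ℝ) 0 := by simp
  -- L¹ bound and convergence of N
  have hL1 : ∀ n, eLpNorm (N n) 1 μ ≤ ((Real.toNNReal (1 + max (c : ℝ) 0)) : ℝ≥0∞) := by
    intro n
    have habs : ∫ ω, ‖N n ω‖ ∂μ ≤ 1 + max (c : ℝ) 0 := by
      have hpt : ∀ ω, ‖N n ω‖ ≤ 1 + (N n ω) ^ 2 := by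
        intro ω
        rw [Real.norm_eq_abs]
        nlinarith [sq_abs (N n ω), sq_nonneg (|N n ω| - 1), abs_nonneg (N n ω)]
      calc ∫ ω, ‖N n ω‖ ∂μ ≤ ∫ ω, (1 + (N n ω) ^ 2) ∂μ :=
          integral_mono (hNint n).norm ((integrable_const 1).add (hNsqint n)) hpt
        _ = 1 + ∫ ω, (N n ω) ^ 2 ∂μ := by
            rw [integral_add (integrable_const 1) (hNsqint n)]; simp
        _ ≤ 1 + max (c : ℝ) 0 := by
            have := (hV n).trans (hsum_bd n); linarith
    have heq : eLpNorm (N n) 1 μ = ENNReal.ofReal (∫ ω, ‖N n ω‖ ∂μ) := by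
      rw [eLpNorm_one_eq_lintegral_enorm, ← ofReal_integral_norm_eq_lintegral_enorm (hNint n)]
    rw [heq]
    exact ENNReal.ofReal_le_ofReal habs
  have hconv : ∀ᵐ ω ∂μ, ∃ L : ℝ, Tendsto (fun n => N n ω) atTop (nhds L) :=
    hNmart.submartingale.exists_ae_tendsto_of_bdd hL1
  -- conclusion
  filter_upwards [hconv] with ω hNω hcond
  obtain ⟨hQc, hDc⟩ := hcond
  obtain ⟨L, hL⟩ := hNω
  have hmem : ∀ n, ω ∈ A n := fun n => ⟨hQc n, hDc n⟩
  have hNval : ∀ n, N n ω = ξ n ω - ξ 0 ω - ∑ k ∈ Finset.range n, D k ω := by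
    intro n
    have h1 : N n ω = ∑ k ∈ Finset.range n, (X k ω - D k ω) := by
      rw [hNdef]
      refine Finset.sum_congr rfl fun k _ => ?_
      rw [hYdef]
      simp only [Pi.sub_apply, hhhdef, hggdef, Set.indicator_of_mem (hmem k)]
    rw [h1, Finset.sum_sub_distrib]
    congr 1
    rw [hXdef]
    exact Finset.sum_range_sub (fun k => ξ k ω) n
  have hDsums : Summable fun k => |D k ω| := by
    refine summable_of_sum_range_le (c := (c : ℝ)) (fun k => abs_nonneg _) fun n => ?_
    cases n with
    | zero => simpa using (Nat.cast_nonneg c : (0 : ℝ) ≤ c)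
    | succ n => exact hDc n
  have hDs : Summable fun k => D k ω := Summable.of_abs hDsums
  have hDt : Tendsto (fun n => ∑ k ∈ Finset.range n, D k ω) atTop (nhds (∑' k, D k ω)) :=
    hDs.hasSum.tendsto_sum_nat
  refine ⟨L + ξ 0 ω + ∑' k, D k ω, ?_⟩
  have hξeq : ∀ n, ξ n ω = N n ω + ξ 0 ω + ∑ k ∈ Finset.range n, D k ω := fun n => by
    rw [hNval n]; ring
  rw [show (fun n => ξ n ω) = fun n => N n ω + ξ 0 ω + ∑ k ∈ Finset.range n, D k ω from
    funext hξeq]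
  exact (hL.add tendsto_const_nhds).add hDt

/-- Pemantle–Volkov, Lemma 3.2. Let `(ξ n)` be a real random sequence
adapted to a filtration `(F n)`.  Set `Δ n = E(ξ (n+1) - ξ n | F n)` and
`Q n = E((ξ (n+1) - ξ n)^2 | F n)`.  If `∑ n, |Δ n| < ∞` and `∑ n, Q n < ∞` almost
surely, then `ξ n` converges almost surely to a finite random variable. -/
theorem converges_of_summable_conditional_increments
    {Ω : Type} {m : MeasurableSpace Ω} {μ : Measure Ω} [IsProbabilityMeasure μ]
    (F : Filtration ℕ m) (ξ Δ Q : ℕ → Ω → ℝ)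
    (hadapted : Adapted F ξ)
    (hint : ∀ n, Integrable (ξ n) μ)
    (hsq : ∀ n, Integrable (fun ω => (ξ (n + 1) ω - ξ n ω) ^ 2) μ)
    (hΔ : ∀ n, Δ n =ᵐ[μ] μ[fun ω => ξ (n + 1) ω - ξ n ω | F n])
    (hQ : ∀ n, Q n =ᵐ[μ] μ[fun ω => (ξ (n + 1) ω - ξ n ω) ^ 2 | F n])
    (hΔ_sum : ∀ᵐ ω ∂μ, Summable fun n => |Δ n ω|)
    (hQ_sum : ∀ᵐ ω ∂μ, Summable fun n => Q n ω) :
    ∀ᵐ ω ∂μ, ∃ L : ℝ, Tendsto (fun n => ξ n ω) atTop (nhds L) := by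
  classical
  set D : ℕ → Ω → ℝ := fun n => μ[fun ω => ξ (n + 1) ω - ξ n ω|F n] with hDdef
  set Q' : ℕ → Ω → ℝ := fun n => μ[fun ω => (ξ (n + 1) ω - ξ n ω) ^ 2|F n] with hQ'def
  have hQ'nonneg : ∀ n, 0 ≤ᵐ[μ] Q' n :=
    fun n => condExp_nonneg (Filter.Eventually.of_forall fun ω => sq_nonneg _)
  have key : ∀ c : ℕ, ∀ᵐ ω ∂μ,
      ((∀ n, (∑ k ∈ Finset.range (n + 1), Q' k ω) ≤ (c : ℝ)) ∧
       (∀ n, (∑ k ∈ Finset.range (n + 1), |D k ω|) ≤ (c : ℝ))) →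
      ∃ L : ℝ, Tendsto (fun n => ξ n ω) atTop (nhds L) :=
    fun c => key_lemma F ξ hadapted hint hsq c
  have hΔD : ∀ᵐ ω ∂μ, ∀ n, Δ n ω = D n ω := ae_all_iff.2 fun n => hΔ n
  have hQQ' : ∀ᵐ ω ∂μ, ∀ n, Q n ω = Q' n ω := ae_all_iff.2 fun n => hQ n
  have hQ'0 : ∀ᵐ ω ∂μ, ∀ n, 0 ≤ Q' n ω := ae_all_iff.2 fun n => hQ'nonneg n
  filter_upwards [ae_all_iff.2 key, hΔD, hQQ', hQ'0, hΔ_sum, hQ_sum] with ω hkey hΔDω hQQ'ω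
    hQ'0ω hΔsω hQsω
  have hDsum : Summable fun n => |D n ω| := by
    refine hΔsω.congr fun n => ?_
    rw [hΔDω n]
  have hQ'sum : Summable fun n => Q' n ω := by
    refine hQsω.congr fun n => ?_
    rw [hQQ'ω n]
  obtain ⟨c, hc⟩ := exists_nat_ge ((∑' n, Q' n ω) + ∑' n, |D n ω|)
  have ht1 : (0:ℝ) ≤ ∑' n, Q' n ω := tsum_nonneg fun n => hQ'0ω n
  have ht2 : (0:ℝ) ≤ ∑' n, |D n ω| := tsum_nonneg fun n => abs_nonneg _
  refine hkey c ⟨fun n => ?_, fun n => ?_⟩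
  · calc (∑ k ∈ Finset.range (n + 1), Q' k ω) ≤ ∑' k, Q' k ω :=
        Summable.sum_le_tsum _ (fun k _ => hQ'0ω k) hQ'sum
      _ ≤ (c : ℝ) := by linarith
  · calc (∑ k ∈ Finset.range (n + 1), |D k ω|) ≤ ∑' k, |D k ω| :=
        Summable.sum_le_tsum _ (fun k _ => abs_nonneg _) hDsum
      _ ≤ (c : ℝ) := by linarith
end
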